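/- Let ρ be a group homomorphism from the group ⟨a, b, c, d | a c⁻¹ = b d⁻¹⟩ (the fundamental group of the 4-punctured sphere) into the unit quaternions such that ρ(a), ρ(b), ρ(c), ρ(d) are all purely imaginary. Then {ρ(a), ρ(b), ρ(c), ρ(d)} lie on a common great circle of the unit sphere of purely imaginary quaternions. -/

import Mathlib

noncomputable section

/-- Euclidean dot product of quaternions viewed as vectors in `ℝ⁴`. -/
def qdot (x y : Quaternion ℝ) : ℝ :=
  x.re * y.re + x.imI * y.imI + x.imJ * y.imJ + x.imK * y.imK

open Quaternion


lemma inv_im_unit (c : Quaternion ℝ) (h : c.re = 0) (hn : ‖c‖ = 1) : c⁻¹ = -c := by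
  have hns : Quaternion.normSq c = 1 := by
    rw [Quaternion.normSq_eq_norm_mul_self, hn]; ring
  have hs : star c = -c := by ext <;> simp [h]
  have h1 : c * (-c) = 1 := by
    rw [← hs, Quaternion.self_mul_star, hns]; simp
  exact inv_eq_of_mul_eq_one_right h1

lemma qdot_smul_right (n x : Quaternion ℝ) (r : ℝ) : qdot n (r • x) = r * qdot n x := by
  simp [qdot, Quaternion.re_smul, Quaternion.imI_smul, Quaternion.imJ_smul, Quaternion.imK_smul]
  ring

lemma qdot_cross_left (x y : Quaternion ℝ) (hx : x.re = 0) (hy : y.re = 0) :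
    qdot ⟨0, (x*y).imI, (x*y).imJ, (x*y).imK⟩ x = 0 := by
  simp only [qdot, Quaternion.imI_mul, Quaternion.imJ_mul, Quaternion.imK_mul, hx, hy]
  ring

lemma qdot_cross_right (x y : Quaternion ℝ) (hx : x.re = 0) (hy : y.re = 0) :
    qdot ⟨0, (x*y).imI, (x*y).imJ, (x*y).imK⟩ y = 0 := by
  simp only [qdot, Quaternion.imI_mul, Quaternion.imJ_mul, Quaternion.imK_mul, hx, hy]
  ring

lemma parallel_of_cross_zero (x y : Quaternion ℝ) (hx : x.re = 0) (hnx : ‖x‖ = 1)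
    (h1 : (x*y).imI = 0) (h2 : (x*y).imJ = 0) (h3 : (x*y).imK = 0) :
    y = (-(x*y).re) • x := by
  have hxy : x * y = (((x*y).re : ℝ) : Quaternion ℝ) := by ext <;> simp [h1, h2, h3]
  have hinv : x⁻¹ = -x := inv_im_unit x hx hnx
  have hx0 : x ≠ 0 := by intro h; rw [h] at hnx; simp at hnx
  set r : ℝ := (x*y).re with hr
  calc y = x⁻¹ * (x * y) := by rw [← mul_assoc, inv_mul_cancel₀ hx0, one_mul]
    _ = (-x) * ((r : ℝ) : Quaternion ℝ) := by rw [hinv, hxy]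
    _ = (-r) • x := by rw [Quaternion.mul_coe_eq_smul]; module

/-- If `ρ` is a homomorphism of `⟨a,b,c,d | a c⁻¹ = b d⁻¹⟩` into the unit quaternions
with all four generators sent to purely imaginary elements, then the four images lie on
a common great circle (they are coequatorial): determined by the images `a, b, c, d`
satisfying the pillowcase relation. -/
theorem stmt5 (a b c d : Quaternion ℝ)
    (hare : a.re = 0) (hbre : b.re = 0) (hcre : c.re = 0) (hdre : d.re = 0)
    (ha : ‖a‖ = 1) (hb : ‖b‖ = 1) (hc : ‖c‖ = 1) (hd : ‖d‖ = 1)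
    (hrel : a * c⁻¹ = b * d⁻¹) :
    ∃ n : Quaternion ℝ, n ≠ 0 ∧ n.re = 0 ∧
      qdot n a = 0 ∧ qdot n b = 0 ∧ qdot n c = 0 ∧ qdot n d = 0 := by
  have hac : a * c = b * d := by
    rw [inv_im_unit c hcre hc, inv_im_unit d hdre hd] at hrel
    have := hrel
    simpa [mul_neg, neg_inj] using this
  by_cases h1 : (a*c).imI = 0 ∧ (a*c).imJ = 0 ∧ (a*c).imK = 0
  · -- a,c parallel; b,d parallel
    obtain ⟨hi, hj, hk⟩ := h1
    have hcpar : c = (-(a*c).re) • a := parallel_of_cross_zero a c hare ha hi hj hk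
    have hdpar : d = (-(b*d).re) • b := by
      apply parallel_of_cross_zero b d hbre hb <;> rw [← hac] <;> assumption
    by_cases h2 : (a*b).imI = 0 ∧ (a*b).imJ = 0 ∧ (a*b).imK = 0
    · -- b also parallel to a
      obtain ⟨hi2, hj2, hk2⟩ := h2
      have hbpar : b = (-(a*b).re) • a := parallel_of_cross_zero a b hare ha hi2 hj2 hk2
      have ha0 : a ≠ 0 := by intro h; rw [h] at ha; simp at ha
      -- find n orthogonal to a
      obtain ⟨n, hn0, hnre, hna⟩ :
          ∃ n : Quaternion ℝ, n ≠ 0 ∧ n.re = 0 ∧ qdot n a = 0 := by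
        by_cases h3 : a.imI = 0 ∧ a.imJ = 0
        · refine ⟨⟨0, 1, 0, 0⟩, ?_, rfl, ?_⟩
          · intro h; have := congrArg QuaternionAlgebra.imI h; simp at this
          · simp [qdot, h3.1]
        · refine ⟨⟨0, -a.imJ, a.imI, 0⟩, ?_, rfl, ?_⟩
          · intro h
            have hJ := congrArg QuaternionAlgebra.imI h
            have hI := congrArg QuaternionAlgebra.imJ h
            simp at hJ hI
            exact h3 ⟨hI, hJ⟩
          · simp [qdot, hare]; ring
      refine ⟨n, hn0, hnre, hna, ?_, ?_, ?_⟩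
      · rw [hbpar, qdot_smul_right, hna, mul_zero]
      · rw [hcpar, qdot_smul_right, hna, mul_zero]
      · rw [hdpar, qdot_smul_right, hbpar, qdot_smul_right, hna]; ring
    · -- use cross(a,b)
      refine ⟨⟨0, (a*b).imI, (a*b).imJ, (a*b).imK⟩, ?_, rfl, ?_, ?_, ?_, ?_⟩
      · intro h
        apply h2
        have hI := congrArg QuaternionAlgebra.imI h
        have hJ := congrArg QuaternionAlgebra.imJ h
        have hK := congrArg QuaternionAlgebra.imK h
        simp only [show ((0:Quaternion ℝ).imI)=0 from rfl, show ((0:Quaternion ℝ).imJ)=0 from rfl, show ((0:Quaternion ℝ).imK)=0 from rfl] at hI hJ hK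
        exact ⟨hI, hJ, hK⟩
      · exact qdot_cross_left a b hare hbre
      · exact qdot_cross_right a b hare hbre
      · rw [hcpar]; exact (qdot_smul_right _ _ _).trans (by rw [qdot_cross_left a b hare hbre, mul_zero])
      · rw [hdpar]; exact (qdot_smul_right _ _ _).trans (by rw [qdot_cross_right a b hare hbre, mul_zero])
  · -- use cross(a,c)
    refine ⟨⟨0, (a*c).imI, (a*c).imJ, (a*c).imK⟩, ?_, rfl, ?_, ?_, ?_, ?_⟩
    · intro h
      apply h1
      have hI := congrArg QuaternionAlgebra.imI h
      have hJ := congrArg QuaternionAlgebra.imJ h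
      have hK := congrArg QuaternionAlgebra.imK h
      simp only [show ((0:Quaternion ℝ).imI)=0 from rfl, show ((0:Quaternion ℝ).imJ)=0 from rfl, show ((0:Quaternion ℝ).imK)=0 from rfl] at hI hJ hK
      exact ⟨hI, hJ, hK⟩
    · exact qdot_cross_left a c hare hcre
    · have := qdot_cross_left b d hbre hdre
      rw [hac]; exact this
    · exact qdot_cross_right a c hare hcre
    · have := qdot_cross_right b d hbre hdre
      rw [hac]; exact this
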